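/- Let E be a Lie algebroid over M of rank > 1 and let X₀ be a nowhere-vanishing section generating a Lie ideal (i.e. [Sec(E), X₀] ⊂ C∞(M)·X₀). Then the anchor ρ(X₀) = 0, and there is a section φ_{X₀} of E* with [Y, X₀] = ⟨Y, φ_{X₀}⟩ X₀ for all sections Y; moreover φ_{X₀} is a closed 1-form for the Lie algebroid differential, i.e. ⟨[Y₁, Y₂], φ_{X₀}⟩ = ρ(Y₁)⟨Y₂, φ_{X₀}⟩ − ρ(Y₂)⟨Y₁, φ_{X₀}⟩. -/

import Mathlib

/-- An algebraic model of (the sections of) a Lie algebroid: a Lie–Rinehart algebra.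
`R` plays the role of `C∞(M)`, `L` of the space of sections of `E`, and `anchor` of the
anchor map `ρ` acting on functions. -/
structure LieRinehartAlg (K R L : Type*) [CommRing K] [CommRing R] [Algebra K R]
    [LieRing L] [LieAlgebra K L] [Module R L] where
  anchor : L → (R →ₗ[K] R)
  anchor_add : ∀ X Y : L, anchor (X + Y) = anchor X + anchor Y
  anchor_smul : ∀ (f : R) (X : L) (g : R), anchor (f • X) g = f * anchor X g
  anchor_deriv : ∀ (X : L) (f g : R), anchor X (f * g) = f * anchor X g + g * anchor X f
  anchor_bracket : ∀ (X Y : L) (f : R),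
    anchor ⁅X, Y⁆ f = anchor X (anchor Y f) - anchor Y (anchor X f)
  leibniz_rule : ∀ (X : L) (f : R) (Y : L), ⁅X, f • Y⁆ = f • ⁅X, Y⁆ + (anchor X f) • Y

/-- Let `E` be a Lie algebroid over `M` of rank `> 1` and `X₀` a
nowhere-vanishing section generating a Lie ideal.  Then the anchor `ρ(X₀) = 0`, and there is
a section `φ_{X₀}` of `E*` (an `R`-linear functional on sections) with
`[Y, X₀] = ⟨Y, φ_{X₀}⟩·X₀` for all `Y`; moreover `φ_{X₀}` is closed for the Lie algebroid
differential: `⟨[Y₁, Y₂], φ⟩ = ρ(Y₁)⟨Y₂, φ⟩ − ρ(Y₂)⟨Y₁, φ⟩`.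
(Here "nowhere vanishing" is encoded by `f • X₀ = 0 → f = 0`, and "rank > 1" by: no nonzero
function `f` can push every section into the line spanned by `X₀`.) -/
theorem stmt_17 {K R L : Type*} [CommRing K] [CommRing R] [Algebra K R]
    [LieRing L] [LieAlgebra K L] [Module R L]
    (P : LieRinehartAlg K R L) (X₀ : L)
    (h_nonvanishing : ∀ f : R, f • X₀ = 0 → f = 0)
    (h_ideal : ∀ Y : L, ∃ f : R, ⁅Y, X₀⁆ = f • X₀)
    (h_rank : ∀ f : R, (∀ Y : L, ∃ g : R, f • Y = g • X₀) → f = 0) :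
    P.anchor X₀ = 0 ∧
    ∃ φ : L → R,
      (∀ (f : R) (Y : L), φ (f • Y) = f * φ Y) ∧
      (∀ Y Y' : L, φ (Y + Y') = φ Y + φ Y') ∧
      (∀ Y : L, ⁅Y, X₀⁆ = φ Y • X₀) ∧
      (∀ Y₁ Y₂ : L, φ ⁅Y₁, Y₂⁆ = P.anchor Y₁ (φ Y₂) - P.anchor Y₂ (φ Y₁)) := by

  classical
  have uniq : ∀ f g : R, f • X₀ = g • X₀ → f = g := by
    intro f g h
    have := h_nonvanishing (f - g) (by rw [sub_smul, h, sub_self])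
    exact sub_eq_zero.mp this
  set φ : L → R := fun Y => (h_ideal Y).choose with hφ
  have hspec : ∀ Y : L, ⁅Y, X₀⁆ = φ Y • X₀ := fun Y => (h_ideal Y).choose_spec
  -- anchor X₀ = 0
  have hanchor : P.anchor X₀ = 0 := by
    ext f
    simp only [LinearMap.zero_apply]
    apply h_rank
    intro Y
    have h1 : ⁅X₀, f • Y⁆ = f • ⁅X₀, Y⁆ + (P.anchor X₀ f) • Y := P.leibniz_rule X₀ f Y
    have h2 : ⁅X₀, f • Y⁆ = -(φ (f • Y) • X₀) := by
      rw [← lie_skew, hspec (f • Y)]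
    have h3 : ⁅X₀, Y⁆ = -(φ Y • X₀) := by rw [← lie_skew, hspec Y]
    refine ⟨f * φ Y - φ (f • Y), ?_⟩
    have : (P.anchor X₀ f) • Y = ⁅X₀, f • Y⁆ - f • ⁅X₀, Y⁆ := by
      rw [h1]; abel
    rw [this, h2, h3, smul_neg, smul_smul, sub_smul]
    abel
  refine ⟨hanchor, φ, ?_, ?_, hspec, ?_⟩
  · intro f Y
    apply uniq
    rw [← hspec]
    have : ⁅f • Y, X₀⁆ = -⁅X₀, f • Y⁆ := (lie_skew _ _).symm
    rw [this, P.leibniz_rule, hanchor]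
    simp only [LinearMap.zero_apply, zero_smul, add_zero]
    rw [← lie_skew X₀ Y, hspec Y]
    rw [smul_neg, neg_neg, smul_smul, mul_smul, smul_smul]
  · intro Y Y'
    apply uniq
    rw [← hspec, add_lie, hspec Y, hspec Y', add_smul]
  · intro Y₁ Y₂
    apply uniq
    rw [← hspec]
    have hjac : ⁅⁅Y₁, Y₂⁆, X₀⁆ = ⁅Y₁, ⁅Y₂, X₀⁆⁆ - ⁅Y₂, ⁅Y₁, X₀⁆⁆ := by
      rw [lie_lie]
    rw [hjac, hspec Y₂, hspec Y₁, P.leibniz_rule, P.leibniz_rule,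
      hspec Y₁, hspec Y₂, smul_smul, smul_smul, sub_smul,
      mul_comm (φ Y₂) (φ Y₁)]
    abel
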